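/- If a group G admits a Conradian left-invariant total order ≺ whose only ≺-convex subgroups are {1} and G itself, then G is abelian. -/

import Mathlib

set_option linter.unusedSectionVars false

/-- A left-invariant total order (left order) on a group `G`. -/
def IsLeftOrder {G : Type*} [Group G] (r : G → G → Prop) : Prop :=
  IsStrictTotalOrder G r ∧ ∀ h f g : G, r f g → r (h * f) (h * g)

/-- A subgroup `C` is convex for `r` if `f ≺ g ≺ h` with `f, h ∈ C` implies `g ∈ C`. -/
def IsConvexSubgroup {G : Type*} [Group G] (r : G → G → Prop) (C : Subgroup G) : Prop :=
  ∀ f g h : G, f ∈ C → h ∈ C → r f g → r g h → g ∈ C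

/-- A left order is Conradian if for all positive `f, g` there is `k : ℕ`
with `g ≺ f·gᵏ`. -/
def IsConradian {G : Type*} [Group G] (r : G → G → Prop) : Prop :=
  ∀ f g : G, r 1 f → r 1 g → ∃ k : ℕ, r g (f * g ^ k)

section StmtSevenAux

variable {G : Type*} [Group G] [LinearOrder G]

section LeftOnly
variable [MulLeftStrictMono G] [MulLeftMono G]

private theorem myLemA (hc : ∀ f g : G, 1 < f → 1 < g → ∃ k : ℕ, g < f * g ^ k)
    {f g : G} (hf : 1 < f) {n : ℕ} (hg : g < f ^ n) :
    ∃ m : ℕ, 1 ≤ m ∧ g * f ^ n < f ^ m := by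
  rcases Nat.eq_zero_or_pos n with rfl | hn
  · refine ⟨1, le_refl _, ?_⟩
    rw [pow_zero] at hg ⊢
    rw [mul_one, pow_one]
    exact hg.trans hf
  · have hfn : (1 : G) < f ^ n := one_lt_pow' hf hn.ne'
    have h1 : (1 : G) < g⁻¹ * f ^ n := by
      have := mul_lt_mul_right hg g⁻¹
      rwa [inv_mul_cancel] at this
    obtain ⟨k, hk⟩ := hc (g⁻¹ * f ^ n) (f ^ n) h1 hfn
    refine ⟨n + n * k, le_add_right (by omega), ?_⟩
    have hk' : f ^ n < g⁻¹ * f ^ (n + n * k) := by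
      calc f ^ n < g⁻¹ * f ^ n * (f ^ n) ^ k := hk
        _ = g⁻¹ * f ^ (n + n * k) := by rw [← pow_mul, mul_assoc, ← pow_add]
    have := mul_lt_mul_right hk' g
    rwa [mul_inv_cancel_left] at this

private theorem arch_of_conrad (hc : ∀ f g : G, 1 < f → 1 < g → ∃ k : ℕ, g < f * g ^ k)
    (hconv : ∀ C : Subgroup G,
      (∀ x y z : G, x ∈ C → z ∈ C → x < y → y < z → y ∈ C) → C = ⊥ ∨ C = ⊤) :
    ∀ f g : G, 1 < f → ∃ n : ℕ, g < f ^ n := by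
  intro f g hf
  -- the subgroup of f-bounded elements
  have mono : ∀ {x : G} {n m : ℕ}, x < f ^ n → n ≤ m → x < f ^ m := fun hx hnm =>
    hx.trans_le (pow_le_pow_right' hf.le hnm)
  set S : Set G := {x : G | ∃ n : ℕ, x < f ^ n ∧ x⁻¹ < f ^ n} with hS
  have hmul : ∀ {a b : G}, a ∈ S → b ∈ S → a * b ∈ S := by
    rintro a b ⟨na, ha1, ha2⟩ ⟨nb, hb1, hb2⟩
    set N := max na nb with hN
    have haN : a < f ^ N := mono ha1 (le_max_left _ _)
    have haN' : a⁻¹ < f ^ N := mono ha2 (le_max_left _ _)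
    have hbN : b < f ^ N := mono hb1 (le_max_right _ _)
    have hbN' : b⁻¹ < f ^ N := mono hb2 (le_max_right _ _)
    obtain ⟨m1, hm1pos, hm1⟩ := myLemA hc hf haN
    obtain ⟨m2, hm2pos, hm2⟩ := myLemA hc hf hbN'
    refine ⟨max m1 m2, ?_, ?_⟩
    · have : a * b < a * f ^ N := mul_lt_mul_right hbN a
      exact mono (this.trans hm1) (le_max_left _ _)
    · rw [mul_inv_rev]
      have : b⁻¹ * a⁻¹ < b⁻¹ * f ^ N := mul_lt_mul_right haN' b⁻¹
      exact mono (this.trans hm2) (le_max_right _ _)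
  have hone : (1 : G) ∈ S := by
    refine ⟨1, ?_, ?_⟩
    · rw [pow_one]; exact hf
    · rw [inv_one, pow_one]; exact hf
  have hinv : ∀ {a : G}, a ∈ S → a⁻¹ ∈ S := by
    rintro a ⟨n, h1, h2⟩
    exact ⟨n, h2, by rwa [inv_inv]⟩
  set C : Subgroup G :=
    { carrier := S
      mul_mem' := hmul
      one_mem' := hone
      inv_mem' := hinv } with hC
  have hCconv : ∀ x y z : G, x ∈ C → z ∈ C → x < y → y < z → y ∈ C := by
    rintro x y z ⟨nx, hx1, hx2⟩ ⟨nz, hz1, hz2⟩ hxy hyz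
    have hyb : y < f ^ nz := hyz.trans hz1
    -- x⁻¹ * y ∈ S
    have hw : x⁻¹ * y ∈ S := by
      set N := max nz nx with hN
      have hyN : y < f ^ N := mono hyb (le_max_left _ _)
      have hxN : x⁻¹ < f ^ N := mono hx2 (le_max_right _ _)
      obtain ⟨m, hmpos, hm⟩ := myLemA hc hf hxN
      refine ⟨m, ?_, ?_⟩
      · have h1 : x⁻¹ * y < x⁻¹ * f ^ N := mul_lt_mul_right hyN x⁻¹
        exact h1.trans hm
      · rw [mul_inv_rev, inv_inv]
        have h2 : y⁻¹ * x < 1 := by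
          have := mul_lt_mul_right hxy y⁻¹
          rwa [inv_mul_cancel] at this
        exact h2.trans (one_lt_pow' hf (by omega))
    have : x * (x⁻¹ * y) ∈ C := C.mul_mem (⟨nx, hx1, hx2⟩ : x ∈ C) hw
    rwa [mul_inv_cancel_left] at this
  rcases hconv C hCconv with hbot | htop
  · exfalso
    have hfC : f ∈ C := by
      refine ⟨2, ?_, ?_⟩
      · calc f = f * 1 := (mul_one f).symm
          _ < f * f := mul_lt_mul_right hf f
          _ = f ^ 2 := (pow_two f).symm
      · have hinv1 : f⁻¹ < 1 := by
          have := mul_lt_mul_right hf f⁻¹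
          rwa [mul_one, inv_mul_cancel] at this
        exact hinv1.trans (one_lt_pow' hf two_ne_zero)
    rw [hbot] at hfC
    exact absurd (Subgroup.mem_bot.mp hfC) (ne_of_gt hf)
  · have : g ∈ C := htop ▸ Subgroup.mem_top g
    obtain ⟨n, h1, _⟩ := this
    exact ⟨n, h1⟩

private theorem step1 (harch : ∀ f g : G, 1 < f → ∃ n : ℕ, g < f ^ n)
    {a g : G} (ha : 1 < a) (hg : 1 < g) : g < a * g := by
  by_contra hcon
  push_neg at hcon  -- a * g ≤ g
  have claim : ∀ k : ℕ, a ^ (k + 1) * g ≤ g := by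
    intro k
    induction k with
    | zero => rwa [pow_one]
    | succ k ih =>
      have he : a ^ (k + 1 + 1) * g = a * (a ^ (k + 1) * g) := by
        rw [pow_succ', mul_assoc]
      rw [he]
      calc a * (a ^ (k + 1) * g) ≤ a * g := mul_le_mul_right ih a
        _ ≤ g := hcon
  obtain ⟨n, hn⟩ := harch a g ha
  rcases Nat.eq_zero_or_pos n with rfl | hnpos
  · rw [pow_zero] at hn
    exact absurd hn (not_lt.mpr hg.le)
  · have h2 : a ^ n * g ≤ g := by
      obtain ⟨k, rfl⟩ : ∃ k, n = k + 1 := ⟨n - 1, by omega⟩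
      exact claim k
    have h3 : a ^ n < a ^ n * g := by
      have := mul_lt_mul_right hg (a ^ n)
      rwa [mul_one] at this
    exact absurd ((h3.trans_le h2).trans hn) (lt_irrefl _)

private theorem step2 (harch : ∀ f g : G, 1 < f → ∃ n : ℕ, g < f ^ n)
    {a g : G} (ha : 1 < a) (hg : 1 < g) : 1 < g * a * g⁻¹ := by
  rcases lt_trichotomy (g * a * g⁻¹) 1 with hlt | heq | hgt
  · exfalso
    have hc1 : (1 : G) < (g * a * g⁻¹)⁻¹ := by
      have := mul_lt_mul_right hlt (g * a * g⁻¹)⁻¹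
      rwa [inv_mul_cancel, mul_one] at this
    have hkey : ∀ n : ℕ, ((g * a * g⁻¹)⁻¹) ^ n = g * (a ^ n)⁻¹ * g⁻¹ := by
      intro n
      have e1 : (g * a * g⁻¹)⁻¹ = g * a⁻¹ * g⁻¹ := by
        simp [mul_inv_rev, mul_assoc]
      rw [e1, conj_pow, inv_pow]
    obtain ⟨n, hn⟩ := harch ((g * a * g⁻¹)⁻¹) g hc1
    rw [hkey] at hn
    have h1 : (1 : G) < (a ^ n)⁻¹ * g⁻¹ := by
      have := mul_lt_mul_right hn g⁻¹
      rwa [inv_mul_cancel, ← mul_assoc, ← mul_assoc, inv_mul_cancel, one_mul] at this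
    have h2 : a ^ n < g⁻¹ := by
      have := mul_lt_mul_right h1 (a ^ n)
      rwa [mul_one, ← mul_assoc, mul_inv_cancel, one_mul] at this
    have h3 : g⁻¹ < 1 := by
      have := mul_lt_mul_right hg g⁻¹
      rwa [mul_one, inv_mul_cancel] at this
    have h4 : (1 : G) ≤ a ^ n := one_le_pow_of_one_le' ha.le n
    exact absurd ((h4.trans_lt h2).trans h3) (lt_irrefl _)
  · exfalso
    have h1 : g * a = g := by
      have := congrArg (· * g) heq
      simpa [mul_assoc] using this
    have h2 : a = 1 := by
      have := congrArg (g⁻¹ * ·) h1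
      simpa [mul_assoc] using this
    rw [h2] at ha
    exact lt_irrefl _ ha
  · exact hgt

private theorem rightMono_of_arch (harch : ∀ f g : G, 1 < f → ∃ n : ℕ, g < f ^ n) :
    MulRightStrictMono G := by
  constructor
  intro c a b h
  have hd : (1 : G) < a⁻¹ * b := by
    have := mul_lt_mul_right h a⁻¹
    rwa [inv_mul_cancel] at this
  have key : (1 : G) < c⁻¹ * (a⁻¹ * b) * c := by
    rcases lt_trichotomy c 1 with hc | hc | hc
    · have hc' : (1 : G) < c⁻¹ := by
        have := mul_lt_mul_right hc c⁻¹
        rwa [mul_one, inv_mul_cancel] at this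
      have := step2 harch hd hc'
      rwa [inv_inv] at this
    · subst hc; simpa using hd
    · have h1 := step1 harch hd hc
      have h2 := mul_lt_mul_right h1 c⁻¹
      rwa [inv_mul_cancel, ← mul_assoc] at h2
  calc a * c = a * c * 1 := (mul_one _).symm
    _ < a * c * (c⁻¹ * (a⁻¹ * b) * c) := mul_lt_mul_right key (a * c)
    _ = b * c := by simp [mul_assoc]

end LeftOnly

section BothSides
variable [MulLeftStrictMono G] [MulLeftMono G] [MulRightStrictMono G] [MulRightMono G]

private theorem my_zpow_mono {f : G} (hf : 1 ≤ f) {p q : ℤ} (h : p ≤ q) : f ^ p ≤ f ^ q := by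
  have h0 : (0 : ℤ) ≤ q - p := sub_nonneg.2 h
  have h1 : (1 : G) ≤ f ^ (q - p) := by
    lift q - p to ℕ using h0 with n hn
    rw [zpow_natCast]
    exact one_le_pow_of_one_le' hf n
  calc f ^ p = f ^ p * 1 := (mul_one _).symm
    _ ≤ f ^ p * f ^ (q - p) := mul_le_mul_right h1 _
    _ = f ^ q := by rw [← zpow_add, add_sub_cancel]

private theorem my_zpow_strict {f : G} (hf : 1 < f) {p q : ℤ} (h : p < q) : f ^ p < f ^ q := by
  have h0 : (0 : ℤ) < q - p := sub_pos.2 h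
  have h1 : (1 : G) < f ^ (q - p) := by
    lift q - p to ℕ using h0.le with n hn
    rw [zpow_natCast]
    refine one_lt_pow' hf ?_
    rintro rfl
    simp at h0
  calc f ^ p = f ^ p * 1 := (mul_one _).symm
    _ < f ^ p * f ^ (q - p) := mul_lt_mul_right h1 _
    _ = f ^ q := by rw [← zpow_add, add_sub_cancel]

private theorem my_zpow_reverse {f : G} (hf : 1 < f) {p q : ℤ} (h : f ^ p ≤ f ^ q) : p ≤ q :=
  le_of_not_gt fun hh => absurd (my_zpow_strict hf hh) (not_lt.2 h)

private theorem mul_pow_succ (a b : G) : ∀ n : ℕ, (a * b) ^ (n + 1) = a * (b * a) ^ n * b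
  | 0 => by simp
  | n + 1 => by
    rw [pow_succ' (a * b), mul_pow_succ a b n, pow_succ' (b * a)]
    simp only [mul_assoc]

private theorem est1 {a b : G} (hab : a * b ≤ b * a) : ∀ q : ℕ, a ^ q * b ^ q ≤ (a * b) ^ q
  | 0 => by simp
  | q + 1 => by
    calc a ^ (q + 1) * b ^ (q + 1) = a * (a ^ q * b ^ q) * b := by
          rw [pow_succ' a, pow_succ b]; simp only [mul_assoc]
      _ ≤ a * (a * b) ^ q * b :=
          mul_le_mul_left (mul_le_mul_right (est1 hab q) a) b
      _ ≤ a * (b * a) ^ q * b :=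
          mul_le_mul_left (mul_le_mul_right (pow_le_pow_left' hab q) a) b
      _ = (a * b) ^ (q + 1) := (mul_pow_succ a b q).symm

private theorem est2 {a b : G} (hab : a * b ≤ b * a) : ∀ q : ℕ, (b * a) ^ q ≤ b ^ q * a ^ q
  | 0 => by simp
  | q + 1 => by
    calc (b * a) ^ (q + 1) = b * (a * b) ^ q * a := mul_pow_succ b a q
      _ ≤ b * (b * a) ^ q * a :=
          mul_le_mul_left (mul_le_mul_right (pow_le_pow_left' hab q) b) a
      _ ≤ b * (b ^ q * a ^ q) * a :=
          mul_le_mul_left (mul_le_mul_right (est2 hab q) b) a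
      _ = b ^ (q + 1) * a ^ (q + 1) := by
          rw [pow_succ' b, pow_succ a]; simp only [mul_assoc]

private theorem ampA {f g : G} {p : ℤ} {q : ℕ} (h : f ^ p ≤ g ^ q) (k : ℕ) :
    f ^ (p * k) ≤ g ^ (q * k) := by
  have h2 : (f ^ p) ^ k ≤ (g ^ q) ^ k := pow_le_pow_left' h k
  rwa [← zpow_natCast (f ^ p), ← zpow_mul, ← pow_mul] at h2

private theorem ampU {f g : G} {p : ℤ} {q : ℕ} (h : g ^ q ≤ f ^ p) (k : ℕ) :
    g ^ (q * k) ≤ f ^ (p * k) := by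
  have h2 : (g ^ q) ^ k ≤ (f ^ p) ^ k := pow_le_pow_left' h k
  rwa [← zpow_natCast (f ^ p), ← zpow_mul, ← pow_mul] at h2

private def Aset (f g : G) : Set ℝ :=
  {x | ∃ p : ℤ, ∃ q : ℕ, 0 < q ∧ f ^ p ≤ g ^ q ∧ x = (p : ℝ) / (q : ℝ)}

private def Uset (f g : G) : Set ℝ :=
  {x | ∃ p : ℤ, ∃ q : ℕ, 0 < q ∧ g ^ q ≤ f ^ p ∧ x = (p : ℝ) / (q : ℝ)}

private noncomputable def phi (f g : G) : ℝ := sSup (Aset f g)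

private noncomputable def psi (f g : G) : ℝ := sInf (Uset f g)

variable {f : G} (hf : 1 < f) (harch : ∀ x y : G, 1 < x → ∃ n : ℕ, y < x ^ n)

include hf harch

private theorem Aset_ne (g : G) : (Aset f g).Nonempty := by
  obtain ⟨n, hn⟩ := harch f g⁻¹ hf
  have h1 : (f ^ n)⁻¹ < g := inv_lt'.mp hn
  refine ⟨((-(n : ℤ) : ℤ) : ℝ) / ((1 : ℕ) : ℝ), -(n : ℤ), 1, one_pos, ?_, rfl⟩
  rw [zpow_neg, zpow_natCast, pow_one]
  exact h1.le

private theorem Aset_bdd (g : G) : BddAbove (Aset f g) := by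
  obtain ⟨N, hN⟩ := harch f g hf
  refine ⟨(N : ℝ), ?_⟩
  rintro x ⟨p, q, hq, hle, rfl⟩
  have h1 : g ^ q ≤ f ^ (N * q) := by
    have := pow_le_pow_left' hN.le q
    rwa [← pow_mul] at this
  have h2 : f ^ p ≤ f ^ ((N * q : ℕ) : ℤ) := by
    rw [zpow_natCast]
    exact hle.trans h1
  have h3 : p ≤ (N * q : ℕ) := my_zpow_reverse hf h2
  rw [div_le_iff₀ (by exact_mod_cast hq)]
  calc (p : ℝ) ≤ ((N * q : ℕ) : ℤ) := by exact_mod_cast h3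
    _ = (N : ℝ) * q := by push_cast; ring

private theorem Uset_ne (g : G) : (Uset f g).Nonempty := by
  obtain ⟨N, hN⟩ := harch f g hf
  refine ⟨(((N : ℤ)) : ℝ) / ((1 : ℕ) : ℝ), (N : ℤ), 1, one_pos, ?_, rfl⟩
  rw [pow_one, zpow_natCast]
  exact hN.le

private theorem Uset_bdd (g : G) : BddBelow (Uset f g) := by
  obtain ⟨M, hM⟩ := harch f g⁻¹ hf
  have h1 : f ^ (-(M : ℤ)) ≤ g := by
    rw [zpow_neg, zpow_natCast]
    exact (inv_lt'.mp hM).le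
  refine ⟨(-(M : ℤ) : ℤ) , ?_⟩
  rintro x ⟨p, q, hq, hle, rfl⟩
  have h2 : f ^ (-(M : ℤ) * q) ≤ g ^ q := by
    have := ampA (by rwa [pow_one] : f ^ (-(M:ℤ)) ≤ g ^ (1 : ℕ)) q
    rwa [one_mul] at this
  have h3 : -(M : ℤ) * q ≤ p := my_zpow_reverse hf (h2.trans hle)
  rw [le_div_iff₀ (by exact_mod_cast hq)]
  exact_mod_cast h3

private theorem AleU (g : G) : ∀ x ∈ Aset f g, ∀ y ∈ Uset f g, x ≤ y := by
  rintro x ⟨p, q, hq, h1, rfl⟩ y ⟨p', q', hq', h2, rfl⟩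
  have ha : f ^ (p * q') ≤ g ^ (q * q') := ampA h1 q'
  have hb : g ^ (q * q') ≤ f ^ (p' * q) := by
    rw [mul_comm q q']
    exact ampU h2 q
  have h3 : p * q' ≤ p' * q := my_zpow_reverse hf (ha.trans hb)
  rw [div_le_div_iff₀ (by exact_mod_cast hq) (by exact_mod_cast hq')]
  exact_mod_cast h3

private theorem phi_le_psi (g : G) : phi f g ≤ psi f g :=
  csSup_le (Aset_ne hf harch g) fun x hx =>
    le_csInf (Uset_ne hf harch g) fun y hy => AleU hf harch g x hx y hy

private theorem between (g : G) (q : ℕ) (hq : 0 < q) :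
    ∃ p : ℤ, f ^ p ≤ g ^ q ∧ g ^ q < f ^ (p + 1) := by
  obtain ⟨N, hN⟩ := harch f (g ^ q) hf
  obtain ⟨n, hn⟩ := harch f (g ^ q)⁻¹ hf
  have hinh : f ^ (-(n : ℤ)) ≤ g ^ q := by
    rw [zpow_neg, zpow_natCast]
    exact (inv_lt'.mp hn).le
  have hbdd : ∀ z : ℤ, f ^ z ≤ g ^ q → z ≤ (N : ℤ) := by
    intro z hz
    refine my_zpow_reverse hf ?_
    rw [zpow_natCast]
    exact hz.trans hN.le
  obtain ⟨p, hp, hmax⟩ := Int.exists_greatest_of_bdd ⟨(N : ℤ), hbdd⟩ ⟨-(n : ℤ), hinh⟩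
  refine ⟨p, hp, ?_⟩
  by_contra hcon
  push_neg at hcon
  have := hmax (p + 1) hcon
  omega

private theorem psi_le_phi (g : G) : psi f g ≤ phi f g := by
  by_contra hcon
  push_neg at hcon
  obtain ⟨n, hn⟩ := exists_nat_one_div_lt (sub_pos.2 hcon)
  have key : psi f g ≤ phi f g + 1 / ((n + 1 : ℕ) : ℝ) := by
    obtain ⟨p, h1, h2⟩ := between hf harch g (n + 1) (Nat.succ_pos n)
    have m1 : ((p + 1 : ℤ) : ℝ) / ((n + 1 : ℕ) : ℝ) ∈ Uset f g :=
      ⟨p + 1, n + 1, Nat.succ_pos n, h2.le, rfl⟩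
    have m2 : ((p : ℤ) : ℝ) / ((n + 1 : ℕ) : ℝ) ∈ Aset f g :=
      ⟨p, n + 1, Nat.succ_pos n, h1, rfl⟩
    have hq : (0 : ℝ) < ((n + 1 : ℕ) : ℝ) := by exact_mod_cast Nat.succ_pos n
    calc psi f g ≤ ((p + 1 : ℤ) : ℝ) / ((n + 1 : ℕ) : ℝ) := csInf_le (Uset_bdd hf harch g) m1
      _ = ((p : ℤ) : ℝ) / ((n + 1 : ℕ) : ℝ) + 1 / ((n + 1 : ℕ) : ℝ) := by
          push_cast; field_simp
      _ ≤ phi f g + 1 / ((n + 1 : ℕ) : ℝ) :=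
          add_le_add_left (le_csSup (Aset_bdd hf harch g) m2) _
  have hcast : ((n + 1 : ℕ) : ℝ) = (n : ℝ) + 1 := by push_cast; ring
  rw [hcast] at key
  linarith

private theorem phi_eq_psi (g : G) : phi f g = psi f g :=
  le_antisymm (phi_le_psi hf harch g) (psi_le_phi hf harch g)

private theorem memA_add {a b : G} :
    ∀ x ∈ Aset f a, ∀ y ∈ Aset f b, x + y ∈ Aset f (a * b) := by
  rintro x ⟨p, q, hq, h1, rfl⟩ y ⟨p', q', hq', h2, rfl⟩
  refine ⟨p * q' + p' * q, q * q', Nat.mul_pos hq hq', ?_, ?_⟩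
  · have ha' : f ^ (p * q') ≤ a ^ (q * q') := ampA h1 q'
    have hb' : f ^ (p' * q) ≤ b ^ (q * q') := by
      rw [mul_comm q q']
      exact ampA h2 q
    rcases le_total (a * b) (b * a) with hab | hba
    · calc f ^ (p * q' + p' * q) = f ^ (p * q') * f ^ (p' * q) := zpow_add f _ _
        _ ≤ a ^ (q * q') * b ^ (q * q') := mul_le_mul' ha' hb'
        _ ≤ (a * b) ^ (q * q') := est1 hab _
    · calc f ^ (p * q' + p' * q) = f ^ (p' * q) * f ^ (p * q') := by
            rw [← zpow_add, add_comm]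
        _ ≤ b ^ (q * q') * a ^ (q * q') := mul_le_mul' hb' ha'
        _ ≤ (b * a) ^ (q * q') := est1 hba _
        _ ≤ (a * b) ^ (q * q') := pow_le_pow_left' hba _
  · have hq0 : ((q : ℕ) : ℝ) ≠ 0 := by exact_mod_cast hq.ne'
    have hq0' : ((q' : ℕ) : ℝ) ≠ 0 := by exact_mod_cast hq'.ne'
    push_cast
    rw [div_add_div _ _ hq0 hq0']
    ring

private theorem memU_add {a b : G} :
    ∀ x ∈ Uset f a, ∀ y ∈ Uset f b, x + y ∈ Uset f (a * b) := by
  rintro x ⟨p, q, hq, h1, rfl⟩ y ⟨p', q', hq', h2, rfl⟩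
  refine ⟨p * q' + p' * q, q * q', Nat.mul_pos hq hq', ?_, ?_⟩
  · have ha' : a ^ (q * q') ≤ f ^ (p * q') := ampU h1 q'
    have hb' : b ^ (q * q') ≤ f ^ (p' * q) := by
      rw [mul_comm q q']
      exact ampU h2 q
    rcases le_total (a * b) (b * a) with hab | hba
    · calc (a * b) ^ (q * q') ≤ (b * a) ^ (q * q') := pow_le_pow_left' hab _
        _ ≤ b ^ (q * q') * a ^ (q * q') := est2 hab _
        _ ≤ f ^ (p' * q) * f ^ (p * q') := mul_le_mul' hb' ha'
        _ = f ^ (p * q' + p' * q) := by rw [← zpow_add, add_comm]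
    · calc (a * b) ^ (q * q') ≤ a ^ (q * q') * b ^ (q * q') := est2 hba _
        _ ≤ f ^ (p * q') * f ^ (p' * q) := mul_le_mul' ha' hb'
        _ = f ^ (p * q' + p' * q) := (zpow_add f _ _).symm
  · have hq0 : ((q : ℕ) : ℝ) ≠ 0 := by exact_mod_cast hq.ne'
    have hq0' : ((q' : ℕ) : ℝ) ≠ 0 := by exact_mod_cast hq'.ne'
    push_cast
    rw [div_add_div _ _ hq0 hq0']
    ring

private theorem phi_super (a b : G) : phi f a + phi f b ≤ phi f (a * b) := by
  have h2 : ∀ x ∈ Aset f a, x ≤ phi f (a * b) - phi f b := by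
    intro x hx
    have h3 : phi f b ≤ phi f (a * b) - x := by
      refine csSup_le (Aset_ne hf harch b) fun y hy => ?_
      have := le_csSup (Aset_bdd hf harch (a * b)) (memA_add hf harch x hx y hy)
      have hd : phi f (a * b) = sSup (Aset f (a * b)) := rfl
      linarith
    linarith
  have := csSup_le (Aset_ne hf harch a) h2
  have hd : phi f a = sSup (Aset f a) := rfl
  linarith

private theorem psi_sub (a b : G) : psi f (a * b) ≤ psi f a + psi f b := by
  have h2 : ∀ y ∈ Uset f a, psi f (a * b) - psi f b ≤ y := by
    intro y hy
    have h3 : psi f (a * b) - y ≤ psi f b := by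
      refine le_csInf (Uset_ne hf harch b) fun y' hy' => ?_
      have := csInf_le (Uset_bdd hf harch (a * b)) (memU_add hf harch y hy y' hy')
      have hd : psi f (a * b) = sInf (Uset f (a * b)) := rfl
      linarith
    linarith
  have := le_csInf (Uset_ne hf harch a) h2
  have hd : psi f a = sInf (Uset f a) := rfl
  linarith

private theorem phi_add (a b : G) : phi f (a * b) = phi f a + phi f b := by
  refine le_antisymm ?_ (phi_super hf harch a b)
  rw [phi_eq_psi hf harch (a * b), phi_eq_psi hf harch a, phi_eq_psi hf harch b]
  exact psi_sub hf harch a b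

private theorem phi_pos {g : G} (hg : 1 < g) : 0 < phi f g := by
  obtain ⟨n, hn⟩ := harch g f hg
  have hn0 : n ≠ 0 := by
    rintro rfl
    rw [pow_zero] at hn
    exact absurd hn (not_lt.2 hf.le)
  have mem : ((1 : ℤ) : ℝ) / ((n : ℕ) : ℝ) ∈ Aset f g := by
    refine ⟨1, n, Nat.pos_of_ne_zero hn0, ?_, rfl⟩
    rw [zpow_one]
    exact hn.le
  have h1 : (0 : ℝ) < ((1 : ℤ) : ℝ) / ((n : ℕ) : ℝ) := by
    have : (0 : ℝ) < ((n : ℕ) : ℝ) := by exact_mod_cast Nat.pos_of_ne_zero hn0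
    positivity
  exact h1.trans_le (le_csSup (Aset_bdd hf harch g) mem)


omit hf harch

private theorem comm_of_arch (harch : ∀ x y : G, 1 < x → ∃ n : ℕ, y < x ^ n) :
    ∀ a b : G, a * b = b * a := by
  by_cases hex : ∃ f : G, 1 < f
  · obtain ⟨f, hf⟩ := hex
    intro a b
    rcases lt_trichotomy (a * b) (b * a) with h | h | h
    · exfalso
      have hc1 : (1 : G) < (a * b)⁻¹ * (b * a) := by
        have := mul_lt_mul_right h (a * b)⁻¹
        rwa [inv_mul_cancel] at this
      have he : (a * b) * ((a * b)⁻¹ * (b * a)) = b * a := mul_inv_cancel_left _ _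
      have h1 : phi f (b * a) = phi f (a * b) + phi f ((a * b)⁻¹ * (b * a)) := by
        rw [← he, phi_add hf harch]
        rw [he]
      have h2 : phi f (a * b) = phi f a + phi f b := phi_add hf harch a b
      have h3 : phi f (b * a) = phi f b + phi f a := phi_add hf harch b a
      have h4 : 0 < phi f ((a * b)⁻¹ * (b * a)) := phi_pos hf harch hc1
      linarith
    · exact h
    · exfalso
      have hc1 : (1 : G) < (b * a)⁻¹ * (a * b) := by
        have := mul_lt_mul_right h (b * a)⁻¹
        rwa [inv_mul_cancel] at this
      have he : (b * a) * ((b * a)⁻¹ * (a * b)) = a * b := mul_inv_cancel_left _ _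
      have h1 : phi f (a * b) = phi f (b * a) + phi f ((b * a)⁻¹ * (a * b)) := by
        rw [← he, phi_add hf harch]
        rw [he]
      have h2 : phi f (a * b) = phi f a + phi f b := phi_add hf harch a b
      have h3 : phi f (b * a) = phi f b + phi f a := phi_add hf harch b a
      have h4 : 0 < phi f ((b * a)⁻¹ * (a * b)) := phi_pos hf harch hc1
      linarith
  · push_neg at hex
    have h1 : ∀ x : G, x = 1 := by
      intro x
      rcases lt_trichotomy x 1 with hx | hx | hx
      · exfalso
        have h2 : (1 : G) < x⁻¹ := by
          have := mul_lt_mul_right hx x⁻¹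
          rwa [mul_one, inv_mul_cancel] at this
        exact absurd h2 (not_lt.2 (hex x⁻¹))
      · exact hx
      · exact absurd hx (not_lt.2 (hex x))
    intro a b
    rw [h1 a, h1 b]

end BothSides

end StmtSevenAux

/-- (Hölder-type theorem for Conradian orders.) If a group admits a Conradian
left order whose only convex subgroups are `{1}` and the whole group, then the
group is abelian. -/
theorem stmt_7 {G : Type*} [Group G] (r : G → G → Prop) (hr : IsLeftOrder r)
    (hc : IsConradian r)
    (hconv : ∀ C : Subgroup G, IsConvexSubgroup r C → C = ⊥ ∨ C = ⊤) :
    ∀ a b : G, a * b = b * a := by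
  obtain ⟨hsto, hleft⟩ := hr
  haveI := hsto
  haveI : DecidableRel r := fun _ _ => Classical.dec _
  letI : LinearOrder G := linearOrderOfSTO r
  haveI : MulLeftStrictMono G := ⟨fun c a b h => hleft c a b h⟩
  haveI : MulLeftMono G := covariantClass_le_of_lt G G (· * ·)
  have hc' : ∀ f g : G, 1 < f → 1 < g → ∃ k : ℕ, g < f * g ^ k := hc
  have hconv' : ∀ C : Subgroup G,
      (∀ x y z : G, x ∈ C → z ∈ C → x < y → y < z → y ∈ C) → C = ⊥ ∨ C = ⊤ :=
    fun C hC => hconv C hC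
  have harch0 := arch_of_conrad hc' hconv'
  have harch : ∀ x y : G, 1 < x → ∃ n : ℕ, y < x ^ n := fun x y hx => harch0 x y hx
  haveI : MulRightStrictMono G := rightMono_of_arch harch
  haveI : MulRightMono G := ⟨fun c a b h => by
    rcases h.lt_or_eq with h' | h'
    · exact (mul_lt_mul_left h' c).le
    · rw [h']⟩
  exact comm_of_arch harch
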